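/- Define w_n := 2^n for integers n ≤ 0 and w_n := 1/(n+1) for integers n > 0, and let W be the bounded operator on ℓ²(ℤ,ℂ) with (Wf)(n) = (w_n/w_{n−1})·f(n−1); since 1/2 ≤ w_{n+1}/w_n ≤ 2 for all n, W is bounded and invertible with bounded inverse. Then: (1) ‖W^N‖ = 2^N and ‖((W*)⁻¹)^N‖ = N+1 for every integer N ≥ 1; (2) the spectral radius of W equals 2, the spectral radius of W* equals 2, and the spectral radii of W⁻¹ and (W*)⁻¹ both equal 1; consequently the spectrum of W is contained in { z ∈ ℂ : 1 ≤ |z| ≤ 2 } and the spectrum of (W*)⁻¹ is contained in { z ∈ ℂ : 1/2 ≤ |z| ≤ 1 }; (3) the set S₀(W) = { f : ‖W^N f‖ → 0 } is dense in ℓ²(ℤ,ℂ), while S((W*)⁻¹) = { f : sup_N ‖((W*)⁻¹)^N f‖ < ∞ } = {0}. -/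

import Mathlib

noncomputable section
open Real ContinuousLinearMap Filter
open scoped ENNReal NNReal InnerProductSpace
open Topology

/-- The Hilbert space `ℓ²(ℤ, ℂ)` of square-summable two-sided complex sequences. -/
abbrev l2 : Type := lp (fun _ : ℤ => ℂ) 2

/-- The set `S₀(T)` of vectors whose orbit under `T` tends to `0` in norm. -/
def S0 (T : l2 →L[ℂ] l2) : Set l2 :=
  {f | Tendsto (fun N : ℕ => ‖(T ^ N) f‖) atTop (nhds 0)}

/-- The set `S(T)` of vectors with bounded orbit under `T`. -/
def Sbd (T : l2 →L[ℂ] l2) : Set l2 :=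
  {f | ∃ C : ℝ, 0 ≤ C ∧ ∀ N : ℕ, ‖(T ^ N) f‖ ≤ C}


section weights
variable {w : ℤ → ℝ}
  (hw : ∀ n : ℤ, (n ≤ 0 → w n = (2 : ℝ) ^ n) ∧ (0 < n → w n = ((n : ℝ) + 1)⁻¹))

include hw

lemma wpos : ∀ n, 0 < w n := by
  intro n
  rcases le_or_gt n 0 with h | h
  · rw [(hw n).1 h]; positivity
  · rw [(hw n).2 h]
    have h0 : (0:ℝ) < (n:ℝ) := by exact_mod_cast h
    positivity

lemma wstep : ∀ n : ℤ, w n ≤ 2 * w (n - 1) := by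
  intro n
  rcases le_or_gt n 0 with h | h
  · rw [(hw n).1 h, (hw (n-1)).1 (by omega)]
    rw [show n = (n-1) + 1 by ring, zpow_add_one₀ (two_ne_zero)]
    ring_nf
    simp [mul_comm]
  · rcases eq_or_lt_of_le (show (1:ℤ) ≤ n from h) with h1 | h1
    · rw [(hw n).2 h, (hw (n-1)).1 (by omega)]
      rw [← h1]; norm_num
    · rw [(hw n).2 h, (hw (n-1)).2 (by omega)]
      have hn : (1:ℝ) ≤ (n:ℝ) := by exact_mod_cast h
      have h2 : ((n:ℝ) - 1) + 1 = (n:ℝ) := by ring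
      push_cast
      rw [h2]
      have i1 : ((n:ℝ)+1)⁻¹ ≤ (n:ℝ)⁻¹ := by
        apply inv_anti₀ (by linarith) (by linarith)
      have i2 : (0:ℝ) ≤ (n:ℝ)⁻¹ := by positivity
      linarith

/-- upper weight ratio bound: `w n ≤ 2^N * w (n - N)` -/
lemma wub : ∀ (N : ℕ) (n : ℤ), w n ≤ 2 ^ N * w (n - N) := by
  intro N
  induction N with
  | zero => intro n; simp
  | succ N ih =>
    intro n
    calc w n ≤ 2 ^ N * w (n - N) := ih n
    _ ≤ 2 ^ N * (2 * w (n - N - 1)) := by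
        have := wstep hw (n - N)
        have h2 : (0:ℝ) < 2 ^ N := by positivity
        nlinarith
    _ = 2 ^ (N+1) * w (n - (N+1:ℕ)) := by
        rw [show (n - (N+1:ℕ) : ℤ) = n - N - 1 by push_cast; ring]
        ring

/-- lower weight ratio bound: `w m ≤ (k+1) * w (m + k)` -/
lemma wlb : ∀ (m : ℤ) (k : ℕ), w m ≤ ((k:ℝ) + 1) * w (m + k) := by
  intro m k
  have hk1 : (1:ℝ) ≤ (k:ℝ) + 1 := by linarith [k.cast_nonneg (α := ℝ)]
  rcases le_or_gt (m + k) 0 with h | h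
  · have hm : m ≤ 0 := by omega
    rw [(hw m).1 hm, (hw (m+k)).1 h]
    have mono : (2:ℝ) ^ m ≤ 2 ^ (m + k) := by
      apply zpow_le_zpow_right₀ one_le_two (by omega)
    nlinarith [zpow_pos (show (0:ℝ) < 2 by norm_num) (m+k)]
  · rcases le_or_gt m 0 with hm | hm
    · rw [(hw m).1 hm, (hw (m+k)).2 h]
      have e1 : (2:ℝ) ^ m ≤ 1 := by
        calc (2:ℝ) ^ m ≤ 2 ^ (0:ℤ) := zpow_le_zpow_right₀ one_le_two hm
        _ = 1 := zpow_zero 2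
      have e2 : (0:ℝ) < ((m:ℝ) + k) + 1 := by
        have : (1:ℝ) ≤ ((m+k : ℤ) : ℝ) := by exact_mod_cast h
        push_cast at this ⊢; linarith
      have e3 : ((m:ℝ) + k) + 1 ≤ (k:ℝ) + 1 := by
        have : (m:ℝ) ≤ 0 := by exact_mod_cast hm
        linarith
      have e4 : (1:ℝ) ≤ ((k:ℝ)+1) * (((m:ℝ)+k)+1)⁻¹ := by
        rw [le_mul_inv_iff₀ e2]; linarith
      push_cast
      calc (2:ℝ) ^ m ≤ 1 := e1
      _ ≤ _ := e4
    · rw [(hw m).2 hm, (hw (m+k)).2 (by omega)]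
      have h1 : (1:ℝ) ≤ (m:ℝ) := by exact_mod_cast hm
      have hk0 : (0:ℝ) ≤ (k:ℝ) := k.cast_nonneg
      push_cast
      rw [inv_le_iff_one_le_mul₀ (by linarith), show ((k:ℝ)+1) * ((m:ℝ)+(k:ℝ)+1)⁻¹ * ((m:ℝ)+1) = (((k:ℝ)+1) * ((m:ℝ)+1)) * ((m:ℝ)+(k:ℝ)+1)⁻¹ by ring, ← div_eq_mul_inv, le_div_iff₀ (by linarith)]
      nlinarith

lemma w0 : w 0 = 1 := by rw [(hw 0).1 le_rfl]; norm_num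

lemma wneg (N : ℕ) : w (-(N:ℤ)) = (2 ^ N)⁻¹ := by
  rw [(hw _).1 (by omega), zpow_neg, zpow_natCast]

lemma wN (N : ℕ) (h : 1 ≤ N) : w (N:ℤ) = ((N:ℝ) + 1)⁻¹ := by
  rw [(hw _).2 (by exact_mod_cast h)]; norm_num

lemma wtend (m : ℤ) : Tendsto (fun N : ℕ => w (m + N)) atTop (𝓝 0) := by
  have h : Tendsto (fun N : ℕ => (((m + N : ℤ):ℝ) + 1)⁻¹) atTop (𝓝 0) := by
    apply Tendsto.inv_tendsto_atTop
    apply tendsto_atTop_add_const_right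
    have : Tendsto (fun N : ℕ => ((N:ℝ) + (m:ℝ))) atTop atTop :=
      tendsto_atTop_add_const_right _ _ tendsto_natCast_atTop_atTop
    refine this.congr (fun N => by push_cast; ring)
  refine h.congr' ?_
  filter_upwards [eventually_ge_atTop ((-m).toNat + 1)] with N hN
  have hm : -m ≤ ((-m).toNat : ℤ) := Int.self_le_toNat (-m)
  have hN' : ((-m).toNat : ℤ) + 1 ≤ (N:ℤ) := by exact_mod_cast hN
  have h2 : 0 < m + (N:ℤ) := by omega
  rw [(hw (m + N)).2 h2]

end weights

lemma two_toReal : ((2:ℝ≥0∞)).toReal = 2 := by simp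

lemma norm_le_shift {M : ℝ} (hM : 0 ≤ M) (σ : ℤ ≃ ℤ) (f g : l2)
    (h : ∀ n, ‖g n‖ ≤ M * ‖f (σ n)‖) : ‖g‖ ≤ M * ‖f‖ := by
  have hp : 0 < ((2:ℝ≥0∞)).toReal := by rw [two_toReal]; norm_num
  have hsf : Summable (fun n : ℤ => ‖f n‖ ^ ((2:ℝ≥0∞)).toReal) := (lp.memℓp f).summable hp
  have hsfσ : Summable (fun n : ℤ => ‖f (σ n)‖ ^ ((2:ℝ≥0∞)).toReal) :=
    (σ.summable_iff (f := fun n : ℤ => ‖f n‖ ^ ((2:ℝ≥0∞)).toReal)).2 hsf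
  have hsg : Summable (fun n : ℤ => ‖g n‖ ^ ((2:ℝ≥0∞)).toReal) := (lp.memℓp g).summable hp
  have key : ‖g‖ ^ ((2:ℝ≥0∞)).toReal ≤ (M * ‖f‖) ^ ((2:ℝ≥0∞)).toReal := by
    rw [lp.norm_rpow_eq_tsum hp g, Real.mul_rpow hM (norm_nonneg f), lp.norm_rpow_eq_tsum hp f]
    calc ∑' n, ‖g n‖ ^ ((2:ℝ≥0∞)).toReal
        ≤ ∑' n, (M ^ ((2:ℝ≥0∞)).toReal * ‖f (σ n)‖ ^ ((2:ℝ≥0∞)).toReal) := by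
          apply Summable.tsum_le_tsum _ hsg (hsfσ.mul_left _)
          intro n
          rw [← Real.mul_rpow hM (norm_nonneg _)]
          exact Real.rpow_le_rpow (norm_nonneg _) (h n) hp.le
      _ = M ^ ((2:ℝ≥0∞)).toReal * ∑' n, ‖f (σ n)‖ ^ ((2:ℝ≥0∞)).toReal := tsum_mul_left
      _ = M ^ ((2:ℝ≥0∞)).toReal * ∑' n, ‖f n‖ ^ ((2:ℝ≥0∞)).toReal := by
          rw [σ.tsum_eq (f := fun n : ℤ => ‖f n‖ ^ ((2:ℝ≥0∞)).toReal)]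
  exact (Real.rpow_le_rpow_iff (norm_nonneg g) (by positivity) hp).1 key

lemma adj_apply (B : l2 →L[ℂ] l2) (f : l2) (n : ℤ) :
    adjoint B f n = ⟪B (lp.single 2 n (1:ℂ)), f⟫_ℂ := by
  have h1 : ⟪lp.single 2 n (1:ℂ), adjoint B f⟫_ℂ = adjoint B f n := by
    rw [lp.inner_single_left]
    simp
  rw [← h1, adjoint_inner_right]

lemma norm_single_one (n : ℤ) : ‖(lp.single 2 n (1:ℂ) : l2)‖ = 1 := by
  have := lp.norm_single (p := 2) (E := fun _ : ℤ => ℂ)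
    (by norm_num) n (1:ℂ)
  simpa using this

lemma tendsto_nat_rpow_one_div :
    Tendsto (fun n : ℕ => ((n:ℝ) + 1) ^ (1 / (n:ℝ))) atTop (𝓝 1) := by
  have h := tendsto_rpow_div_mul_add 1 1 (-1) zero_ne_one
  have hcomp : Tendsto (fun n : ℕ => (n:ℝ) + 1) atTop atTop :=
    tendsto_atTop_add_const_right _ _ tendsto_natCast_atTop_atTop
  have := h.comp hcomp
  refine this.congr (fun n => ?_)
  simp only [Function.comp_apply]
  norm_num

lemma enn_tendsto_one :
    Tendsto (fun n : ℕ => (((n:ℝ≥0) + 1 : ℝ≥0) : ℝ≥0∞) ^ (1 / (n:ℝ))) atTop (𝓝 1) := by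
  have hne : ∀ n : ℕ, ((n:ℝ≥0) + 1 : ℝ≥0) ≠ 0 := fun n => by positivity
  have hco : ∀ n : ℕ, (((n:ℝ≥0) + 1 : ℝ≥0) : ℝ≥0∞) ^ (1 / (n:ℝ))
      = ((((n:ℝ≥0) + 1 : ℝ≥0) ^ (1 / (n:ℝ)) : ℝ≥0) : ℝ≥0∞) := fun n =>
    (ENNReal.coe_rpow_of_ne_zero (hne n) _).symm
  simp only [hco]
  rw [show (1:ℝ≥0∞) = ((1:ℝ≥0):ℝ≥0∞) by simp]
  rw [ENNReal.tendsto_coe]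
  rw [← NNReal.tendsto_coe]
  refine tendsto_nat_rpow_one_div.congr (fun n => ?_)
  rw [NNReal.coe_rpow]
  push_cast
  ring_nf

lemma specrad_two (T : l2 →L[ℂ] l2) (h : ∀ n : ℕ, 1 ≤ n → ‖T ^ n‖ = 2 ^ n) :
    spectralRadius ℂ T = 2 := by
  have hg := spectrum.pow_nnnorm_pow_one_div_tendsto_nhds_spectralRadius T
  have hev : ∀ᶠ n : ℕ in atTop, (fun n : ℕ => ((2:ℝ≥0∞)) ^ (1:ℝ) ) n
      = (fun n : ℕ => (‖T ^ n‖₊ : ℝ≥0∞) ^ (1 / (n:ℝ))) n := by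
    filter_upwards [eventually_ge_atTop 1] with n hn
    have hnn : ‖T ^ n‖₊ = (2:ℝ≥0) ^ n := by
      apply NNReal.coe_injective
      rw [coe_nnnorm, h n hn]
      push_cast
      ring
    have hn0 : (n:ℝ) ≠ 0 := by positivity
    simp only [hnn, ENNReal.coe_pow]
    rw [← ENNReal.rpow_natCast ((2:ℝ≥0):ℝ≥0∞) n, ← ENNReal.rpow_mul, mul_one_div,
      div_self hn0]
    norm_num
  have h2 : Tendsto (fun n : ℕ => (‖T ^ n‖₊ : ℝ≥0∞) ^ (1 / (n:ℝ))) atTop (𝓝 2) := by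
    refine Tendsto.congr' hev ?_
    simpa using (tendsto_const_nhds : Tendsto (fun _ : ℕ => (2:ℝ≥0∞)) atTop (𝓝 2))
  exact tendsto_nhds_unique hg h2

lemma specrad_one (T : l2 →L[ℂ] l2) (h : ∀ n : ℕ, 1 ≤ n → ‖T ^ n‖ = (n:ℝ) + 1) :
    spectralRadius ℂ T = 1 := by
  have hg := spectrum.pow_nnnorm_pow_one_div_tendsto_nhds_spectralRadius T
  have hev : ∀ᶠ n : ℕ in atTop, (fun n : ℕ => (((n:ℝ≥0) + 1 : ℝ≥0) : ℝ≥0∞) ^ (1 / (n:ℝ))) n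
      = (fun n : ℕ => (‖T ^ n‖₊ : ℝ≥0∞) ^ (1 / (n:ℝ))) n := by
    filter_upwards [eventually_ge_atTop 1] with n hn
    have hnn : ‖T ^ n‖₊ = ((n:ℝ≥0) + 1 : ℝ≥0) := by
      apply NNReal.coe_injective
      rw [coe_nnnorm, h n hn]
      push_cast
      ring
    rw [hnn]
  have h2 : Tendsto (fun n : ℕ => (‖T ^ n‖₊ : ℝ≥0∞) ^ (1 / (n:ℝ))) atTop (𝓝 1) :=
    Tendsto.congr' hev enn_tendsto_one
  exact tendsto_nhds_unique hg h2

lemma mem_le_radius (T : l2 →L[ℂ] l2) {z : ℂ} (hz : z ∈ spectrum ℂ T) :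
    (‖z‖₊ : ℝ≥0∞) ≤ spectralRadius ℂ T :=
  le_iSup₂ (f := fun k (_ : k ∈ spectrum ℂ T) => (‖k‖₊ : ℝ≥0∞)) z hz

section op
variable {w : ℤ → ℝ}
  (hw : ∀ n : ℤ, (n ≤ 0 → w n = (2 : ℝ) ^ n) ∧ (0 < n → w n = ((n : ℝ) + 1)⁻¹))
  {W : (l2 →L[ℂ] l2)ˣ}
  (hW : ∀ (f : l2) (n : ℤ),
    (W : l2 →L[ℂ] l2) f n = ((w n / w (n - 1) : ℝ) : ℂ) * f (n - 1))

variable (hwpos : ∀ n, 0 < w n)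

include hW hwpos

lemma powW : ∀ (N : ℕ) (f : l2) (n : ℤ),
    (((W : l2 →L[ℂ] l2)) ^ N) f n = ((w n / w (n - N) : ℝ) : ℂ) * f (n - N) := by
  intro N
  induction N with
  | zero =>
    intro f n
    simp [div_self (hwpos n).ne']
  | succ N ih =>
    intro f n
    rw [pow_succ, ContinuousLinearMap.mul_apply, ih, hW f (n - N)]
    rw [show (n - (N:ℤ)) - 1 = n - ((N+1 : ℕ):ℤ) by push_cast; ring]
    rw [← mul_assoc, ← Complex.ofReal_mul]
    congr 2
    rw [div_mul_div_comm, mul_comm (w n) _, mul_div_mul_left _ _ (hwpos _).ne']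

lemma invW : ∀ (f : l2) (n : ℤ),
    ((W⁻¹ : (l2 →L[ℂ] l2)ˣ) : l2 →L[ℂ] l2) f n = ((w n / w (n + 1) : ℝ) : ℂ) * f (n + 1) := by
  intro f n
  have hWf : (W : l2 →L[ℂ] l2) (((W⁻¹ : (l2 →L[ℂ] l2)ˣ) : l2 →L[ℂ] l2) f) = f := by
    rw [← ContinuousLinearMap.mul_apply, ← Units.val_mul, mul_inv_cancel, Units.val_one,
      ContinuousLinearMap.one_apply]
  have h := hW (((W⁻¹ : (l2 →L[ℂ] l2)ˣ) : l2 →L[ℂ] l2) f) (n + 1)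
  rw [hWf, add_sub_cancel_right] at h
  have key : ((w n / w (n+1) : ℝ):ℂ) * ((w (n+1) / w n : ℝ):ℂ) = 1 := by
    rw [← Complex.ofReal_mul, div_mul_div_comm, mul_comm (w n) _]
    rw [div_self (mul_ne_zero (hwpos (n+1)).ne' (hwpos n).ne'), Complex.ofReal_one]
  rw [h, ← mul_assoc, key, one_mul]

lemma powInv : ∀ (N : ℕ) (f : l2) (n : ℤ),
    (((W⁻¹ : (l2 →L[ℂ] l2)ˣ) : l2 →L[ℂ] l2) ^ N) f n
      = ((w n / w (n + N) : ℝ) : ℂ) * f (n + N) := by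
  intro N
  induction N with
  | zero =>
    intro f n
    simp [div_self (hwpos n).ne']
  | succ N ih =>
    intro f n
    rw [pow_succ, ContinuousLinearMap.mul_apply, ih, invW hW hwpos f (n + N)]
    rw [show (n + (N:ℤ)) + 1 = n + ((N+1 : ℕ):ℤ) by push_cast; ring]
    rw [← mul_assoc, ← Complex.ofReal_mul]
    congr 2
    rw [div_mul_div_comm, mul_comm (w n) _, mul_div_mul_left _ _ (hwpos _).ne']

lemma powW_single (N : ℕ) (m : ℤ) (a : ℂ) :
    (((W : l2 →L[ℂ] l2)) ^ N) (lp.single 2 m a)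
      = ((w (m + N) / w m : ℝ) : ℂ) • lp.single 2 (m + N) a := by
  apply lp.ext
  funext n
  rw [powW hW hwpos, lp.coeFn_smul, Pi.smul_apply]
  rcases eq_or_ne n (m + N) with h | h
  · subst h
    rw [show m + (N:ℤ) - N = m by ring, lp.single_apply_self, lp.single_apply_self, smul_eq_mul]
  · rw [lp.single_apply_ne _ _ _ (show n - (N:ℤ) ≠ m by omega),
      lp.single_apply_ne _ _ _ h, mul_zero, smul_zero]

lemma powInv_single (N : ℕ) (m : ℤ) (a : ℂ) :
    (((W⁻¹ : (l2 →L[ℂ] l2)ˣ) : l2 →L[ℂ] l2) ^ N) (lp.single 2 m a)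
      = ((w (m - N) / w m : ℝ) : ℂ) • lp.single 2 (m - N) a := by
  apply lp.ext
  funext n
  rw [powInv hW hwpos, lp.coeFn_smul, Pi.smul_apply]
  rcases eq_or_ne n (m - N) with h | h
  · subst h
    rw [show m - (N:ℤ) + N = m by ring, lp.single_apply_self, lp.single_apply_self, smul_eq_mul]
  · rw [lp.single_apply_ne _ _ _ (show n + (N:ℤ) ≠ m by omega),
      lp.single_apply_ne _ _ _ h, mul_zero, smul_zero]

end op
section norms
variable {w : ℤ → ℝ}
  (hw : ∀ n : ℤ, (n ≤ 0 → w n = (2 : ℝ) ^ n) ∧ (0 < n → w n = ((n : ℝ) + 1)⁻¹))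
  {W : (l2 →L[ℂ] l2)ˣ}
  (hW : ∀ (f : l2) (n : ℤ),
    (W : l2 →L[ℂ] l2) f n = ((w n / w (n - 1) : ℝ) : ℂ) * f (n - 1))

include hw hW

lemma normW_le : ‖(W : l2 →L[ℂ] l2)‖ ≤ 2 := by
  refine ContinuousLinearMap.opNorm_le_bound _ (by norm_num) (fun f => ?_)
  refine norm_le_shift (by norm_num) (Equiv.subRight (1:ℤ)) f _ (fun n => ?_)
  rw [hW, norm_mul, Complex.norm_real, Real.norm_eq_abs,
    abs_of_pos (div_pos (wpos hw n) (wpos hw (n-1)))]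
  have h2 : w n / w (n-1) ≤ 2 := by
    rw [div_le_iff₀ (wpos hw (n-1))]
    have := wstep hw n
    linarith
  have : ((Equiv.subRight (1:ℤ)) n) = n - 1 := rfl
  rw [this]
  exact mul_le_mul_of_nonneg_right h2 (norm_nonneg _)

lemma normWpow (N : ℕ) (hN : 1 ≤ N) : ‖((W : l2 →L[ℂ] l2)) ^ N‖ = 2 ^ N := by
  have hub : ‖((W : l2 →L[ℂ] l2)) ^ N‖ ≤ 2 ^ N := by
    calc ‖((W : l2 →L[ℂ] l2)) ^ N‖ ≤ ‖(W : l2 →L[ℂ] l2)‖ ^ N := norm_pow_le' _ (by omega)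
    _ ≤ 2 ^ N := pow_le_pow_left₀ (norm_nonneg _) (normW_le hw hW) N
  have hsingle := powW_single hW (wpos hw) N (-(N:ℤ)) 1
  rw [show -(N:ℤ) + N = 0 by ring] at hsingle
  have hcoef : w 0 / w (-(N:ℤ)) = 2 ^ N := by
    rw [w0 hw, wneg hw N, one_div, inv_inv]
  rw [hcoef] at hsingle
  have hnorm : ‖(((W : l2 →L[ℂ] l2)) ^ N) (lp.single 2 (-(N:ℤ)) 1)‖ = 2 ^ N := by
    rw [hsingle, norm_smul, norm_single_one, Complex.norm_real, Real.norm_eq_abs,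
      abs_of_pos (by positivity), mul_one]
  have hlb : (2:ℝ) ^ N ≤ ‖((W : l2 →L[ℂ] l2)) ^ N‖ := by
    rw [← hnorm]
    calc ‖(((W : l2 →L[ℂ] l2)) ^ N) (lp.single 2 (-(N:ℤ)) 1)‖
        ≤ ‖((W : l2 →L[ℂ] l2)) ^ N‖ * ‖(lp.single 2 (-(N:ℤ)) (1:ℂ) : l2)‖ :=
          ContinuousLinearMap.le_opNorm _ _
    _ = ‖((W : l2 →L[ℂ] l2)) ^ N‖ := by rw [norm_single_one, mul_one]
  linarith

lemma normInvPow (N : ℕ) (hN : 1 ≤ N) :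
    ‖((W⁻¹ : (l2 →L[ℂ] l2)ˣ) : l2 →L[ℂ] l2) ^ N‖ = (N:ℝ) + 1 := by
  have hub : ‖((W⁻¹ : (l2 →L[ℂ] l2)ˣ) : l2 →L[ℂ] l2) ^ N‖ ≤ (N:ℝ) + 1 := by
    refine ContinuousLinearMap.opNorm_le_bound _ (by positivity) (fun f => ?_)
    refine norm_le_shift (by positivity) (Equiv.addRight (N:ℤ)) f _ (fun n => ?_)
    rw [powInv hW (wpos hw), norm_mul, Complex.norm_real, Real.norm_eq_abs,
      abs_of_pos (div_pos (wpos hw n) (wpos hw (n+N)))]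
    have h2 : w n / w (n+N) ≤ (N:ℝ) + 1 := by
      rw [div_le_iff₀ (wpos hw (n+N))]
      have := wlb hw n N
      linarith
    have : ((Equiv.addRight ((N:ℤ))) n) = n + N := rfl
    rw [this]
    exact mul_le_mul_of_nonneg_right h2 (norm_nonneg _)
  have hsingle := powInv_single hW (wpos hw) N ((N:ℤ)) 1
  rw [show (N:ℤ) - N = 0 by ring] at hsingle
  have hcoef : w 0 / w ((N:ℤ)) = (N:ℝ) + 1 := by
    rw [w0 hw, wN hw N hN, one_div, inv_inv]
  rw [hcoef] at hsingle
  have hnorm : ‖(((W⁻¹ : (l2 →L[ℂ] l2)ˣ) : l2 →L[ℂ] l2) ^ N) (lp.single 2 ((N:ℤ)) 1)‖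
      = (N:ℝ) + 1 := by
    rw [hsingle, norm_smul, norm_single_one, Complex.norm_real, Real.norm_eq_abs,
      abs_of_pos (by positivity), mul_one]
  have hlb : (N:ℝ) + 1 ≤ ‖((W⁻¹ : (l2 →L[ℂ] l2)ˣ) : l2 →L[ℂ] l2) ^ N‖ := by
    rw [← hnorm]
    calc ‖(((W⁻¹ : (l2 →L[ℂ] l2)ˣ) : l2 →L[ℂ] l2) ^ N) (lp.single 2 ((N:ℤ)) 1)‖
        ≤ ‖((W⁻¹ : (l2 →L[ℂ] l2)ˣ) : l2 →L[ℂ] l2) ^ N‖ * ‖(lp.single 2 ((N:ℤ)) (1:ℂ) : l2)‖ :=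
          ContinuousLinearMap.le_opNorm _ _
    _ = _ := by rw [norm_single_one, mul_one]
  linarith

end norms

lemma norm_adj_pow (B : l2 →L[ℂ] l2) (N : ℕ) : ‖(adjoint B) ^ N‖ = ‖B ^ N‖ := by
  rw [← star_eq_adjoint, ← star_pow, norm_star]
section final
variable {w : ℤ → ℝ}
  (hw : ∀ n : ℤ, (n ≤ 0 → w n = (2 : ℝ) ^ n) ∧ (0 < n → w n = ((n : ℝ) + 1)⁻¹))
  {W : (l2 →L[ℂ] l2)ˣ}
  (hW : ∀ (f : l2) (n : ℤ),
    (W : l2 →L[ℂ] l2) f n = ((w n / w (n - 1) : ℝ) : ℂ) * f (n - 1))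

include hw hW

/-- pointwise formula for powers of the adjoint of `W⁻¹` -/
lemma padj (N : ℕ) (f : l2) (n : ℤ) :
    ((adjoint ((W⁻¹ : (l2 →L[ℂ] l2)ˣ) : l2 →L[ℂ] l2)) ^ N) f n
      = ((w (n - N) / w n : ℝ) : ℂ) * f (n - N) := by
  have hpow : (adjoint ((W⁻¹ : (l2 →L[ℂ] l2)ˣ) : l2 →L[ℂ] l2)) ^ N
      = adjoint (((W⁻¹ : (l2 →L[ℂ] l2)ˣ) : l2 →L[ℂ] l2) ^ N) := by
    rw [← star_eq_adjoint, ← star_pow, star_eq_adjoint]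
  rw [hpow, adj_apply, powInv_single hW (wpos hw), inner_smul_left, lp.inner_single_left]
  simp [Complex.conj_ofReal]

lemma single_mem_S0 (m : ℤ) (a : ℂ) : lp.single 2 m a ∈ S0 (W : l2 →L[ℂ] l2) := by
  have hnorm : ∀ N : ℕ, ‖(((W : l2 →L[ℂ] l2)) ^ N) (lp.single 2 m a)‖
      = (w (m + N) / w m) * ‖a‖ := by
    intro N
    rw [powW_single hW (wpos hw), norm_smul, Complex.norm_real, Real.norm_eq_abs,
      abs_of_pos (div_pos (wpos hw _) (wpos hw _))]
    congr 1
    exact lp.norm_single (p := 2) (E := fun _ : ℤ => ℂ) (by norm_num) (m + N) a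
  have hlim : Tendsto (fun N : ℕ => (w (m + N) / w m) * ‖a‖) atTop (𝓝 0) := by
    have := ((wtend hw m).div_const (w m)).mul_const ‖a‖
    simpa using this
  exact hlim.congr (fun N => (hnorm N).symm)

lemma dense_S0 : Dense (S0 (W : l2 →L[ℂ] l2)) := by
  intro f
  have hsum := lp.hasSum_single (E := fun _ : ℤ => ℂ) (p := 2) (by norm_num) f
  refine mem_closure_of_tendsto hsum (Eventually.of_forall fun s => ?_)
  refine Finset.sum_induction _ (fun x => x ∈ S0 (W : l2 →L[ℂ] l2)) ?_ ?_ ?_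
  · intro x y hx hy
    have hadd : Tendsto (fun N : ℕ => ‖(((W : l2 →L[ℂ] l2)) ^ N) x‖
        + ‖(((W : l2 →L[ℂ] l2)) ^ N) y‖) atTop (𝓝 0) := by
      simpa using Tendsto.add hx hy
    refine squeeze_zero (fun N => norm_nonneg _) (fun N => ?_) hadd
    rw [map_add]
    exact norm_add_le _ _
  · simp only [S0, Set.mem_setOf_eq, map_zero, norm_zero]
    exact tendsto_const_nhds
  · intro i _
    exact single_mem_S0 hw hW i (f i)

lemma sbd_zero :
    Sbd (adjoint ((W⁻¹ : (l2 →L[ℂ] l2)ˣ) : l2 →L[ℂ] l2)) = {0} := by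
  refine Set.eq_singleton_iff_unique_mem.2 ⟨⟨0, le_rfl, fun N => by simp [Sbd, map_zero]⟩, ?_⟩
  rintro f ⟨C, hC0, hC⟩
  apply lp.ext
  funext m
  show f m = (0 : ℂ)
  rw [← norm_le_zero_iff]
  have h1 : ∀ N : ℕ, (w m / w (m + N)) * ‖f m‖ ≤ C := by
    intro N
    have e : ((adjoint ((W⁻¹ : (l2 →L[ℂ] l2)ˣ) : l2 →L[ℂ] l2)) ^ N) f (m + N)
        = ((w m / w (m + N) : ℝ) : ℂ) * f m := by
      rw [padj hw hW, show m + (N:ℤ) - N = m by ring]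
    calc (w m / w (m + N)) * ‖f m‖
        = ‖((adjoint ((W⁻¹ : (l2 →L[ℂ] l2)ˣ) : l2 →L[ℂ] l2)) ^ N) f (m + N)‖ := by
          rw [e, norm_mul, Complex.norm_real, Real.norm_eq_abs,
            abs_of_pos (div_pos (wpos hw _) (wpos hw _))]
      _ ≤ ‖((adjoint ((W⁻¹ : (l2 →L[ℂ] l2)ˣ) : l2 →L[ℂ] l2)) ^ N) f‖ :=
          lp.norm_apply_le_norm (by norm_num) _ _
      _ ≤ C := hC N
  have h2 : ∀ N : ℕ, ‖f m‖ ≤ (w (m + N) / w m) * C := by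
    intro N
    have hq : 0 < w m / w (m + N) := div_pos (wpos hw _) (wpos hw _)
    have e : ‖f m‖ = (w (m + N) / w m) * ((w m / w (m + N)) * ‖f m‖) := by
      have u1 := (wpos hw m).ne'
      have u2 := (wpos hw (m + N)).ne'
      field_simp
    rw [e]
    exact mul_le_mul_of_nonneg_left (h1 N) (le_of_lt (div_pos (wpos hw _) (wpos hw _)))
  have hlim : Tendsto (fun N : ℕ => (w (m + N) / w m) * C) atTop (𝓝 0) := by
    have := ((wtend hw m).div_const (w m)).mul_const C
    simpa using this
  exact ge_of_tendsto' hlim h2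

end final

lemma norm_le_two_of_radius (T : l2 →L[ℂ] l2) (h : spectralRadius ℂ T = 2) {z : ℂ}
    (hz : z ∈ spectrum ℂ T) : ‖z‖ ≤ 2 := by
  have h1 := mem_le_radius T hz
  rw [h] at h1
  have h2 : (‖z‖₊ : ℝ≥0∞) ≤ ((2:ℝ≥0) : ℝ≥0∞) := by simpa using h1
  have h3 : ‖z‖₊ ≤ (2:ℝ≥0) := ENNReal.coe_le_coe.1 h2
  exact_mod_cast h3

lemma norm_le_one_of_radius (T : l2 →L[ℂ] l2) (h : spectralRadius ℂ T = 1) {z : ℂ}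
    (hz : z ∈ spectrum ℂ T) : ‖z‖ ≤ 1 := by
  have h1 := mem_le_radius T hz
  rw [h] at h1
  have h2 : (‖z‖₊ : ℝ≥0∞) ≤ ((1:ℝ≥0) : ℝ≥0∞) := by simpa using h1
  have h3 : ‖z‖₊ ≤ (1:ℝ≥0) := ENNReal.coe_le_coe.1 h2
  exact_mod_cast h3

lemma inv_mem_spec (U : (l2 →L[ℂ] l2)ˣ) {z : ℂ} (hz : z ∈ spectrum ℂ (U : l2 →L[ℂ] l2)) :
    z ≠ 0 ∧ z⁻¹ ∈ spectrum ℂ ((U⁻¹ : (l2 →L[ℂ] l2)ˣ) : l2 →L[ℂ] l2) := by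
  have hz0 : z ≠ 0 := fun h => Units.zero_notMem_spectrum (R := ℂ) U (h ▸ hz)
  refine ⟨hz0, ?_⟩
  have := (spectrum.inv_mem_iff (r := Units.mk0 z hz0) (a := U)).1 hz
  simpa using this

/-- Let `W` be the weighted bilateral shift with weights `w n = 2^n` (`n ≤ 0`),
`w n = 1/(n+1)` (`n > 0`).  Then `‖W^N‖ = 2^N`, `‖((W*)⁻¹)^N‖ = N+1` for `N ≥ 1`;
the spectral radii of `W`, `W*`, `W⁻¹`, `(W*)⁻¹` are `2`, `2`, `1`, `1`; the spectrum of `W`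
lies in `{1 ≤ |z| ≤ 2}` and that of `(W*)⁻¹` in `{1/2 ≤ |z| ≤ 1}`; and `S₀(W)` is dense
while `S((W*)⁻¹) = {0}`. -/
theorem stmt18
    (w : ℤ → ℝ)
    (hw : ∀ n : ℤ, (n ≤ 0 → w n = (2 : ℝ) ^ n) ∧ (0 < n → w n = ((n : ℝ) + 1)⁻¹))
    (W : (l2 →L[ℂ] l2)ˣ)
    (hW : ∀ (f : l2) (n : ℤ),
      (W : l2 →L[ℂ] l2) f n = ((w n / w (n - 1) : ℝ) : ℂ) * f (n - 1)) :
    (∀ N : ℕ, 1 ≤ N →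
      ‖((W : l2 →L[ℂ] l2)) ^ N‖ = 2 ^ N ∧
      ‖(adjoint ((W⁻¹ : (l2 →L[ℂ] l2)ˣ) : l2 →L[ℂ] l2)) ^ N‖ = (N : ℝ) + 1) ∧
    spectralRadius ℂ (W : l2 →L[ℂ] l2) = 2 ∧
    spectralRadius ℂ (adjoint (W : l2 →L[ℂ] l2)) = 2 ∧
    spectralRadius ℂ ((W⁻¹ : (l2 →L[ℂ] l2)ˣ) : l2 →L[ℂ] l2) = 1 ∧
    spectralRadius ℂ (adjoint ((W⁻¹ : (l2 →L[ℂ] l2)ˣ) : l2 →L[ℂ] l2)) = 1 ∧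
    (∀ z ∈ spectrum ℂ (W : l2 →L[ℂ] l2), 1 ≤ ‖z‖ ∧ ‖z‖ ≤ 2) ∧
    (∀ z ∈ spectrum ℂ (adjoint ((W⁻¹ : (l2 →L[ℂ] l2)ˣ) : l2 →L[ℂ] l2)),
      1 / 2 ≤ ‖z‖ ∧ ‖z‖ ≤ 1) ∧
    Dense (S0 (W : l2 →L[ℂ] l2)) ∧
    Sbd (adjoint ((W⁻¹ : (l2 →L[ℂ] l2)ˣ) : l2 →L[ℂ] l2)) = {0} := by
  have hWn : ∀ N : ℕ, 1 ≤ N → ‖((W : l2 →L[ℂ] l2)) ^ N‖ = 2 ^ N := fun N hN =>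
    normWpow hw hW N hN
  have hAn : ∀ N : ℕ, 1 ≤ N →
      ‖((W⁻¹ : (l2 →L[ℂ] l2)ˣ) : l2 →L[ℂ] l2) ^ N‖ = (N:ℝ) + 1 := fun N hN =>
    normInvPow hw hW N hN
  have hVn : ∀ N : ℕ, 1 ≤ N →
      ‖(adjoint ((W⁻¹ : (l2 →L[ℂ] l2)ˣ) : l2 →L[ℂ] l2)) ^ N‖ = (N:ℝ) + 1 := fun N hN => by
    rw [norm_adj_pow]; exact hAn N hN
  have hTadj : ∀ N : ℕ, 1 ≤ N → ‖(adjoint (W : l2 →L[ℂ] l2)) ^ N‖ = 2 ^ N := fun N hN => by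
    rw [norm_adj_pow]; exact hWn N hN
  have rT : spectralRadius ℂ (W : l2 →L[ℂ] l2) = 2 := specrad_two _ hWn
  have rTadj : spectralRadius ℂ (adjoint (W : l2 →L[ℂ] l2)) = 2 := specrad_two _ hTadj
  have rA : spectralRadius ℂ ((W⁻¹ : (l2 →L[ℂ] l2)ˣ) : l2 →L[ℂ] l2) = 1 := specrad_one _ hAn
  have rV : spectralRadius ℂ (adjoint ((W⁻¹ : (l2 →L[ℂ] l2)ˣ) : l2 →L[ℂ] l2)) = 1 :=
    specrad_one _ hVn
  refine ⟨fun N hN => ⟨hWn N hN, hVn N hN⟩, rT, rTadj, rA, rV, ?_, ?_,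
    dense_S0 hw hW, sbd_zero hw hW⟩
  · intro z hz
    obtain ⟨hz0, hinv⟩ := inv_mem_spec W hz
    have hle : ‖z⁻¹‖ ≤ 1 := norm_le_one_of_radius _ rA hinv
    rw [norm_inv] at hle
    have hzpos : 0 < ‖z‖ := norm_pos_iff.2 hz0
    constructor
    · calc (1:ℝ) = ‖z‖ * ‖z‖⁻¹ := (mul_inv_cancel₀ hzpos.ne').symm
        _ ≤ ‖z‖ * 1 := mul_le_mul_of_nonneg_left hle hzpos.le
        _ = ‖z‖ := mul_one _
    · exact norm_le_two_of_radius _ rT hz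
  · intro z hz
    set U : (l2 →L[ℂ] l2)ˣ :=
      ⟨star ((W⁻¹ : (l2 →L[ℂ] l2)ˣ) : l2 →L[ℂ] l2), star ((W : (l2 →L[ℂ] l2)ˣ) : l2 →L[ℂ] l2),
        by rw [← star_mul, ← Units.val_mul, mul_inv_cancel, Units.val_one, star_one],
        by rw [← star_mul, ← Units.val_mul, inv_mul_cancel, Units.val_one, star_one]⟩ with hU
    have hzU : z ∈ spectrum ℂ (U : l2 →L[ℂ] l2) := by
      rw [← star_eq_adjoint] at hz
      exact hz
    obtain ⟨hz0, hinv⟩ := inv_mem_spec U hzU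
    have hinv' : z⁻¹ ∈ spectrum ℂ (adjoint (W : l2 →L[ℂ] l2)) := by
      rw [← star_eq_adjoint]
      exact hinv
    have hle : ‖z⁻¹‖ ≤ 2 := norm_le_two_of_radius _ rTadj hinv'
    rw [norm_inv] at hle
    have hzpos : 0 < ‖z‖ := norm_pos_iff.2 hz0
    constructor
    · rw [div_le_iff₀ (show (0:ℝ) < 2 by norm_num)]
      calc (1:ℝ) = ‖z‖ * ‖z‖⁻¹ := (mul_inv_cancel₀ hzpos.ne').symm
        _ ≤ ‖z‖ * 2 := mul_le_mul_of_nonneg_left hle hzpos.le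
    · exact norm_le_one_of_radius _ rV hz
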